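/- Suppose functions π_i(ε) > 0, i ∈ X (X finite), satisfy Σ_{i ∈ X} π_i(ε) = 1 for all ε ∈ (0, ε₀], and each π_i admits a pivotal Laurent (n⁻_i, n⁺_i)-expansion π_i(ε) = Σ_{l = n⁻_i}^{n⁺_i} c_i[l] ε^l + o_i(ε^{n⁺_i}) with c_i[n⁻_i] > 0 and n⁻_i ≥ 0. Then: (1) min_{i ∈ X} n⁻_i = 0; (2) Σ_{i ∈ X} c_i[l] = I(l = 0) for all 0 ≤ l ≤ min_{i ∈ X} n⁺_i (coefficients taken as 0 for l < n⁻_i); and (3) for each i, lim_{ε→0+} π_i(ε) exists and equals c_i[0] > 0 if n⁻_i = 0 and equals 0 if n⁻_i > 0. -/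
import Mathlib

open Filter Topology

/-- A Laurent `(h,k)`-asymptotic expansion of `A` on `(0, ε₀]`:
`A(ε) = Σ_{l=h}^{k} a l ε^l + o ε` with `o ε / ε^k → 0` as `ε → 0+`. -/
def IsLaurentExpansion (ε0 : ℝ) (A : ℝ → ℝ) (h k : ℤ) (a : ℤ → ℝ) (o : ℝ → ℝ) : Prop :=
  (∀ ε ∈ Set.Ioc (0:ℝ) ε0, A ε = (∑ l ∈ Finset.Icc h k, a l * ε ^ l) + o ε) ∧
  Filter.Tendsto (fun ε => o ε / ε ^ k) (nhdsWithin 0 (Set.Ioi 0)) (nhds 0)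


private lemma L1 (n : ℤ) (hn : 0 ≤ n) :
    Tendsto (fun ε : ℝ => ε ^ n) (𝓝[>] (0:ℝ)) (𝓝 (if n = 0 then 1 else 0)) := by
  lift n to ℕ using hn
  have h0 : ((0:ℝ) ^ n : ℝ) = if (n:ℤ) = 0 then 1 else 0 := by
    rcases Nat.eq_zero_or_pos n with h | h
    · simp [h]
    · rw [zero_pow (by omega), if_neg (by exact_mod_cast h.ne')]
  have := ((continuous_pow n).tendsto (0:ℝ)).mono_left (nhdsWithin_le_nhds (s := Set.Ioi 0))
  rw [h0] at this
  exact this.congr (fun ε => (zpow_natCast ε n).symm)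

private lemma L2 (o : ℝ → ℝ) (l k : ℤ) (hl : l ≤ k)
    (h : Tendsto (fun ε => o ε / ε ^ k) (𝓝[>] (0:ℝ)) (𝓝 0)) :
    Tendsto (fun ε => o ε / ε ^ l) (𝓝[>] (0:ℝ)) (𝓝 0) := by
  have h2 := h.mul (L1 (k - l) (by omega))
  rw [zero_mul] at h2
  refine h2.congr' ?_
  filter_upwards [self_mem_nhdsWithin] with ε (hε : ε ∈ Set.Ioi (0:ℝ))
  have hεne : ε ≠ 0 := ne_of_gt hε
  rw [div_mul_eq_mul_div, div_eq_div_iff (zpow_ne_zero k hεne) (zpow_ne_zero l hεne),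
    mul_assoc, ← zpow_add₀ hεne]
  ring_nf

private lemma sum_div_zpow (s : Finset ℤ) (a : ℤ → ℝ) (n : ℤ) (ε : ℝ) (hε : ε ≠ 0) :
    (∑ l ∈ s, a l * ε ^ l) / ε ^ n = ∑ l ∈ s, a l * ε ^ (l - n) := by
  rw [Finset.sum_div]
  refine Finset.sum_congr rfl fun l _ => ?_
  rw [zpow_sub₀ hε, mul_div_assoc]

private lemma L3 (s : Finset ℤ) (n : ℤ) (a : ℤ → ℝ) (hs : ∀ l ∈ s, n ≤ l) :
    Tendsto (fun ε : ℝ => ∑ l ∈ s, a l * ε ^ (l - n)) (𝓝[>] (0:ℝ))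
      (𝓝 (if n ∈ s then a n else 0)) := by
  have h := tendsto_finset_sum s (fun l hl => (L1 (l - n) (by linarith [hs l hl])).const_mul (a l))
  have : (∑ l ∈ s, a l * if l - n = 0 then (1:ℝ) else 0) = if n ∈ s then a n else 0 := by
    simp only [sub_eq_zero, mul_ite, mul_one, mul_zero]
    exact Finset.sum_ite_eq' s n a
  rwa [this] at h

private lemma Ioc_mem' (ε0 : ℝ) (hε0 : 0 < ε0) : Set.Ioc (0:ℝ) ε0 ∈ 𝓝[>] (0:ℝ) :=
  Ioc_mem_nhdsGT_of_mem (by simp [hε0])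

private lemma uniq (ε0 : ℝ) (hε0 : 0 < ε0) (m : ℤ) (a : ℤ → ℝ) (R : ℝ → ℝ)
    (heq : ∀ ε ∈ Set.Ioc (0:ℝ) ε0, (∑ l ∈ Finset.Icc (0:ℤ) m, a l * ε ^ l) + R ε = 0)
    (hR : Tendsto (fun ε => R ε / ε ^ m) (𝓝[>] (0:ℝ)) (𝓝 0)) :
    ∀ l : ℤ, 0 ≤ l → l ≤ m → a l = 0 := by
  suffices key : ∀ n : ℕ, (n:ℤ) ≤ m → a n = 0 by
    intro l hl0 hlm
    lift l to ℕ using hl0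
    exact key l hlm
  intro n
  induction n using Nat.strong_induction_on with
  | _ n IH =>
    intro hnm
    have hsplit : ∀ ε ∈ Set.Ioc (0:ℝ) ε0,
        (∑ l ∈ Finset.Icc (n:ℤ) m, a l * ε ^ l) + R ε = 0 := by
      intro ε hε
      have h := heq ε hε
      have hu : Finset.Ico (0:ℤ) n ∪ Finset.Icc (n:ℤ) m = Finset.Icc 0 m := by
        ext x
        simp only [Finset.mem_union, Finset.mem_Ico, Finset.mem_Icc]
        omega
      have hd : Disjoint (Finset.Ico (0:ℤ) n) (Finset.Icc (n:ℤ) m) := by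
        rw [Finset.disjoint_left]
        intro x hx hx'
        simp only [Finset.mem_Ico, Finset.mem_Icc] at hx hx'
        omega
      rw [← hu, Finset.sum_union hd] at h
      have hz : (∑ l ∈ Finset.Ico (0:ℤ) n, a l * ε ^ l) = 0 := by
        refine Finset.sum_eq_zero fun l hl => ?_
        simp only [Finset.mem_Ico] at hl
        have : a l = 0 := by
          have h1 : ((l.toNat : ℤ)) = l := Int.toNat_of_nonneg hl.1
          have := IH l.toNat (by omega) (by omega)
          rwa [h1] at this
        simp [this]
      rw [hz, zero_add] at h
      exact h
    have h1 : Tendsto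
        (fun ε : ℝ => (∑ l ∈ Finset.Icc (n:ℤ) m, a l * ε ^ (l - n)) + R ε / ε ^ (n:ℤ))
        (𝓝[>] (0:ℝ)) (𝓝 (a n)) := by
      have hmem : ((n:ℤ)) ∈ Finset.Icc (n:ℤ) m := by simp [hnm]
      have hs := L3 (Finset.Icc (n:ℤ) m) n a (fun l hl => (Finset.mem_Icc.1 hl).1)
      rw [if_pos hmem] at hs
      have := hs.add (L2 R n m hnm hR)
      rwa [add_zero] at this
    have h2 : (fun ε : ℝ => (∑ l ∈ Finset.Icc (n:ℤ) m, a l * ε ^ (l - n)) + R ε / ε ^ (n:ℤ))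
        =ᶠ[𝓝[>] (0:ℝ)] fun _ => 0 := by
      filter_upwards [Ioc_mem' ε0 hε0] with ε hε
      have hεne : ε ≠ 0 := ne_of_gt hε.1
      rw [← sum_div_zpow _ _ _ _ hεne, ← add_div, hsplit ε hε, zero_div]
    exact tendsto_nhds_unique (h1.congr' h2) tendsto_const_nhds

private lemma L4 (ε0 : ℝ) (hε0 : 0 < ε0) (A : ℝ → ℝ) (h k : ℤ) (a : ℤ → ℝ) (o : ℝ → ℝ)
    (h0 : 0 ≤ h) (hk : h ≤ k) (he : IsLaurentExpansion ε0 A h k a o) :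
    Tendsto A (𝓝[>] (0:ℝ)) (𝓝 (if h = 0 then a 0 else 0)) := by
  obtain ⟨he1, he2⟩ := he
  have ho : Tendsto o (𝓝[>] (0:ℝ)) (𝓝 0) := by
    have := L2 o 0 k (h0.trans hk) he2
    refine this.congr fun ε => ?_
    rw [zpow_zero, div_one]
  have hsum : Tendsto (fun ε : ℝ => ∑ l ∈ Finset.Icc h k, a l * ε ^ l) (𝓝[>] (0:ℝ))
      (𝓝 (if h = 0 then a 0 else 0)) := by
    have := L3 (Finset.Icc h k) 0 a (fun l hl => h0.trans (Finset.mem_Icc.1 hl).1)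
    have hiff : (if (0:ℤ) ∈ Finset.Icc h k then a 0 else 0) = if h = 0 then a 0 else 0 := by
      rcases eq_or_ne h 0 with rfl | hh
      · rw [if_pos (Finset.mem_Icc.2 ⟨le_refl _, hk⟩), if_pos rfl]
      · rw [if_neg (by simp only [Finset.mem_Icc]; omega), if_neg hh]
    rw [hiff] at this
    exact this.congr fun ε => by simp only [sub_zero]
  have := hsum.add ho
  rw [add_zero] at this
  refine this.congr' ?_
  filter_upwards [Ioc_mem' ε0 hε0] with ε hε
  exact (he1 ε hε).symm

/-- properties of Laurent expansions of stationary probabilities summing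
to one: the minimal order is zero, the coefficients sum to `I(l = 0)` up to the minimal
upper order, and each probability converges as `ε → 0+` to its zero-order coefficient
(positive when the lower order is zero, and to `0` otherwise). -/
theorem stationary_probabilities_expansion_properties (ε0 : ℝ) (hε0 : 0 < ε0)
    (hε1 : ε0 ≤ 1) (X : Type*) [Fintype X]
    (hne : (Finset.univ : Finset X).Nonempty)
    (π : X → ℝ → ℝ) (nLo nHi : X → ℤ) (c : X → ℤ → ℝ) (o : X → ℝ → ℝ)
    (hn0 : ∀ i, 0 ≤ nLo i) (hnn : ∀ i, nLo i ≤ nHi i)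
    (hexp : ∀ i, IsLaurentExpansion ε0 (π i) (nLo i) (nHi i) (c i) (o i))
    (hpiv : ∀ i, 0 < c i (nLo i))
    (hpos : ∀ i, ∀ ε ∈ Set.Ioc (0:ℝ) ε0, 0 < π i ε)
    (hsum : ∀ ε ∈ Set.Ioc (0:ℝ) ε0, ∑ i, π i ε = 1) :
    (Finset.univ.inf' hne nLo = 0) ∧
    (∀ l : ℤ, 0 ≤ l → l ≤ Finset.univ.inf' hne nHi →
      (∑ i, if nLo i ≤ l then c i l else 0) = if l = 0 then 1 else 0) ∧
    (∀ i, Filter.Tendsto (π i) (nhdsWithin 0 (Set.Ioi 0))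
        (nhds (if nLo i = 0 then c i 0 else 0)) ∧ (nLo i = 0 → 0 < c i 0)) := by
  -- Part 3
  have part3 : ∀ i, Tendsto (π i) (𝓝[>] (0:ℝ)) (𝓝 (if nLo i = 0 then c i 0 else 0)) :=
    fun i => L4 ε0 hε0 (π i) (nLo i) (nHi i) (c i) (o i) (hn0 i) (hnn i) (hexp i)
  have part3b : ∀ i, nLo i = 0 → 0 < c i 0 := by
    intro i hi
    have := hpiv i
    rwa [hi] at this
  -- sum of limits = 1
  have hsum1 : (∑ i, if nLo i = 0 then c i 0 else 0) = 1 := by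
    have t1 : Tendsto (fun ε => ∑ i, π i ε) (𝓝[>] (0:ℝ))
        (𝓝 (∑ i, if nLo i = 0 then c i 0 else 0)) :=
      tendsto_finset_sum _ fun i _ => part3 i
    have t2 : Tendsto (fun ε => ∑ i, π i ε) (𝓝[>] (0:ℝ)) (𝓝 1) := by
      refine tendsto_const_nhds.congr' ?_
      filter_upwards [Ioc_mem' ε0 hε0] with ε hε
      exact (hsum ε hε).symm
    exact tendsto_nhds_unique t1 t2
  -- Part 1
  have part1 : Finset.univ.inf' hne nLo = 0 := by
    have hex : ∃ i, nLo i = 0 := by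
      by_contra hc
      push_neg at hc
      have : (∑ i, if nLo i = 0 then c i 0 else 0) = 0 :=
        Finset.sum_eq_zero fun i _ => if_neg (hc i)
      rw [this] at hsum1
      norm_num at hsum1
    obtain ⟨i0, hi0⟩ := hex
    refine le_antisymm ?_ (Finset.le_inf' hne nLo fun i _ => hn0 i)
    have h := Finset.inf'_le nLo (Finset.mem_univ i0)
    rwa [hi0] at h
  -- Part 2
  set m := Finset.univ.inf' hne nHi with hm
  have hm0 : 0 ≤ m := Finset.le_inf' hne nHi fun i _ => le_trans (hn0 i) (hnn i)
  have hmle : ∀ i, m ≤ nHi i := fun i => Finset.inf'_le nHi (Finset.mem_univ i)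
  set cH : X → ℤ → ℝ := fun i l => if nLo i ≤ l then c i l else 0 with hcH
  set Q : X → ℝ → ℝ :=
    fun i ε => (∑ l ∈ Finset.Icc (m+1) (nHi i), cH i l * ε ^ l) + o i ε with hQdef
  have hdecomp : ∀ i, ∀ ε ∈ Set.Ioc (0:ℝ) ε0,
      π i ε = (∑ l ∈ Finset.Icc (0:ℤ) m, cH i l * ε ^ l) + Q i ε := by
    intro i ε hε
    rw [(hexp i).1 ε hε, hQdef]
    have e1 : (∑ l ∈ Finset.Icc (nLo i) (nHi i), c i l * ε ^ l)
        = ∑ l ∈ Finset.Icc (0:ℤ) (nHi i), cH i l * ε ^ l := by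
      have hu : Finset.Ico (0:ℤ) (nLo i) ∪ Finset.Icc (nLo i) (nHi i)
          = Finset.Icc (0:ℤ) (nHi i) := by
        ext x
        simp only [Finset.mem_union, Finset.mem_Ico, Finset.mem_Icc]
        have := hn0 i; have := hnn i
        omega
      have hd : Disjoint (Finset.Ico (0:ℤ) (nLo i)) (Finset.Icc (nLo i) (nHi i)) := by
        rw [Finset.disjoint_left]
        intro x hx hx'
        simp only [Finset.mem_Ico, Finset.mem_Icc] at hx hx'
        omega
      rw [← hu, Finset.sum_union hd]
      have z1 : (∑ l ∈ Finset.Ico (0:ℤ) (nLo i), cH i l * ε ^ l) = 0 :=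
        Finset.sum_eq_zero fun l hl => by
          simp only [Finset.mem_Ico] at hl
          simp [hcH, not_le.2 hl.2]
      rw [z1, zero_add]
      refine Finset.sum_congr rfl fun l hl => ?_
      simp only [Finset.mem_Icc] at hl
      simp [hcH, hl.1]
    have e2 : (∑ l ∈ Finset.Icc (0:ℤ) (nHi i), cH i l * ε ^ l)
        = (∑ l ∈ Finset.Icc (0:ℤ) m, cH i l * ε ^ l)
          + ∑ l ∈ Finset.Icc (m+1) (nHi i), cH i l * ε ^ l := by
      have hu : Finset.Icc (0:ℤ) m ∪ Finset.Icc (m+1) (nHi i)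
          = Finset.Icc (0:ℤ) (nHi i) := by
        ext x
        simp only [Finset.mem_union, Finset.mem_Icc]
        have := hmle i
        omega
      have hd : Disjoint (Finset.Icc (0:ℤ) m) (Finset.Icc (m+1) (nHi i)) := by
        rw [Finset.disjoint_left]
        intro x hx hx'
        simp only [Finset.mem_Icc] at hx hx'
        omega
      rw [← hu, Finset.sum_union hd]
    rw [e1, e2]
    ring
  have hQ : ∀ i, Tendsto (fun ε => Q i ε / ε ^ m) (𝓝[>] (0:ℝ)) (𝓝 0) := by
    intro i
    have hs := L3 (Finset.Icc (m+1) (nHi i)) m (cH i)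
      (fun l hl => by simp only [Finset.mem_Icc] at hl; omega)
    rw [if_neg (by simp only [Finset.mem_Icc]; omega)] at hs
    have ho := L2 (o i) m (nHi i) (hmle i) (hexp i).2
    have := hs.add ho
    rw [add_zero] at this
    refine this.congr' ?_
    filter_upwards [self_mem_nhdsWithin] with ε (hε : ε ∈ Set.Ioi (0:ℝ))
    have hεne : ε ≠ 0 := ne_of_gt hε
    rw [hQdef]
    simp only
    rw [add_div, sum_div_zpow _ _ _ _ hεne]
  set a : ℤ → ℝ := fun l => (∑ i, cH i l) - (if l = 0 then 1 else 0) with ha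
  have heq : ∀ ε ∈ Set.Ioc (0:ℝ) ε0,
      (∑ l ∈ Finset.Icc (0:ℤ) m, a l * ε ^ l) + (∑ i, Q i ε) = 0 := by
    intro ε hε
    have e1 : (∑ i, π i ε)
        = (∑ l ∈ Finset.Icc (0:ℤ) m, (∑ i, cH i l) * ε ^ l) + ∑ i, Q i ε := by
      rw [Finset.sum_congr rfl (fun i _ => hdecomp i ε hε), Finset.sum_add_distrib]
      congr 1
      rw [Finset.sum_comm]
      exact Finset.sum_congr rfl fun l _ => (Finset.sum_mul _ _ _).symm
    have e2 : (∑ l ∈ Finset.Icc (0:ℤ) m, (if l = 0 then (1:ℝ) else 0) * ε ^ l) = 1 := by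
      simp only [ite_mul, one_mul, zero_mul]
      rw [Finset.sum_ite_eq' (Finset.Icc (0:ℤ) m) 0 (fun l => ε ^ l),
        if_pos (Finset.mem_Icc.2 ⟨le_refl _, hm0⟩), zpow_zero]
    have e3 : (∑ l ∈ Finset.Icc (0:ℤ) m, a l * ε ^ l)
        = (∑ l ∈ Finset.Icc (0:ℤ) m, (∑ i, cH i l) * ε ^ l)
          - ∑ l ∈ Finset.Icc (0:ℤ) m, (if l = 0 then (1:ℝ) else 0) * ε ^ l := by
      rw [← Finset.sum_sub_distrib]
      exact Finset.sum_congr rfl fun l _ => by rw [ha]; ring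
    have e4 := hsum ε hε
    rw [e3, e2]
    rw [e1] at e4
    linarith
  have hRtot : Tendsto (fun ε => (∑ i, Q i ε) / ε ^ m) (𝓝[>] (0:ℝ)) (𝓝 0) := by
    have := tendsto_finset_sum Finset.univ (fun i (_ : i ∈ Finset.univ) => hQ i)
    rw [Finset.sum_const, smul_zero] at this
    exact this.congr fun ε => (Finset.sum_div _ _ _).symm
  have hA := uniq ε0 hε0 m a (fun ε => ∑ i, Q i ε) heq hRtot
  refine ⟨part1, ?_, fun i => ⟨part3 i, part3b i⟩⟩
  intro l hl0 hlm
  have := hA l hl0 hlm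
  rw [ha] at this
  simp only at this
  linarith [this]
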